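/- The fixed point set of the resolvent S_r equals the solution set of the equilibrium problem: F(S_r) = EP(F) = {x̂ ∈ C : F(x̂, y) ≥ 0 for all y ∈ C}, and moreover EP(F) is closed and convex. -/
import Mathlib


open Set Filter

/-- `F(S_r) = EP(F)` and `EP(F)` is closed and convex, where `EP(F)` is the
solution set of the equilibrium problem. -/
theorem equilibrium_resolvent_fixed_points
    {E : Type*} [NormedAddCommGroup E] [NormedSpace ℝ E] [CompleteSpace E]
    [StrictConvexSpace ℝ E]
    (hrefl : Function.Surjective (NormedSpace.inclusionInDoubleDual ℝ E))
    (J : E → (E →L[ℝ] ℝ))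
    (hJ1 : ∀ x : E, J x x = ‖x‖ ^ 2)
    (hJ2 : ∀ x : E, ‖J x‖ = ‖x‖)
    (C : Set E) (hC : C.Nonempty) (hCc : IsClosed C) (hCv : Convex ℝ C)
    (F : E → E → ℝ)
    (hA1 : ∀ x ∈ C, F x x = 0)
    (hA2 : ∀ x ∈ C, ∀ y ∈ C, F x y + F y x ≤ 0)
    (hA3 : ∀ x ∈ C, ∀ y ∈ C, ∀ z ∈ C,
      Filter.limsup (fun t : ℝ => F (t • z + (1 - t) • x) y) (nhdsWithin 0 (Ioi 0))
        ≤ F x y)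
    (hA4 : ∀ x ∈ C, ConvexOn ℝ C (F x) ∧ LowerSemicontinuousOn (F x) C)
    (r : ℝ) (hr : 0 < r)
    (S : E → E)
    (hS : ∀ x : E, S x ∈ C ∧
      ∀ y ∈ C, F (S x) y + (1 / r) * ((J (S x) - J x) (y - S x)) ≥ 0) :
    {x : E | S x = x} = {x ∈ C | ∀ y ∈ C, F x y ≥ 0} ∧
      IsClosed {x ∈ C | ∀ y ∈ C, F x y ≥ 0} ∧
      Convex ℝ {x ∈ C | ∀ y ∈ C, F x y ≥ 0} := by
  -- Minty characterization: EP(F) = {x ∈ C | ∀ y ∈ C, F y x ≤ 0}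
  have hMinty : {x ∈ C | ∀ y ∈ C, F x y ≥ 0} = {x ∈ C | ∀ y ∈ C, F y x ≤ 0} := by
    ext x
    simp only [Set.mem_setOf_eq]
    constructor
    · rintro ⟨hx, h⟩
      refine ⟨hx, fun y hy => ?_⟩
      have := hA2 x hx y hy
      have := h y hy
      linarith
    · rintro ⟨hx, h⟩
      refine ⟨hx, fun y hy => ?_⟩
      have hlim := hA3 x hx y hy y hy
      have hnn : (0 : ℝ) ≤ Filter.limsup
          (fun t : ℝ => F (t • y + (1 - t) • x) y) (nhdsWithin 0 (Ioi 0)) := by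
        have hg : ∀ t ∈ Ioo (0:ℝ) 1, 0 ≤ F (t • y + (1 - t) • x) y := by
          intro t ht
          set xt := t • y + (1 - t) • x with hxt
          have hxtC : xt ∈ C := hCv hy hx ht.1.le (by linarith [ht.2]) (by ring)
          have h0 : F xt xt = 0 := hA1 xt hxtC
          have hconv := (hA4 xt hxtC).1.2 hy hx ht.1.le
            (by linarith [ht.2] : (0:ℝ) ≤ 1 - t) (by ring)
          simp only [smul_eq_mul] at hconv
          have hle0 : F xt x ≤ 0 := h xt hxtC
          rw [← hxt] at hconv
          rw [h0] at hconv
          by_contra hneg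
          push_neg at hneg
          nlinarith [mul_pos ht.1 (by linarith : (0:ℝ) < -F xt y),
            mul_nonneg (by linarith [ht.2] : (0:ℝ) ≤ 1 - t) (by linarith : (0:ℝ) ≤ -F xt x)]
        have hev : ∀ᶠ t in nhdsWithin (0:ℝ) (Ioi 0),
            0 ≤ F (t • y + (1 - t) • x) y := by
          filter_upwards [Ioo_mem_nhdsGT_of_mem
            (by norm_num : (0:ℝ) ∈ Ico (0:ℝ) 1)] with t ht
          exact hg t ht
        rw [Filter.limsup_eq]
        refine Real.sInf_nonneg (fun a ha => ?_)
        have ha' : ∀ᶠ t in nhdsWithin (0:ℝ) (Ioi 0),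
            F (t • y + (1 - t) • x) y ≤ a := ha
        obtain ⟨t, h1, h2⟩ := (ha'.and hev).exists
        linarith
      exact le_trans hnn hlim
  have hEq : {x : E | S x = x} = {x ∈ C | ∀ y ∈ C, F x y ≥ 0} := by
    ext x
    simp only [Set.mem_setOf_eq]
    constructor
    · intro hsx
      have hxC : x ∈ C := by rw [← hsx]; exact (hS x).1
      refine ⟨hxC, fun y hy => ?_⟩
      have := (hS x).2 y hy
      rw [hsx] at this
      simpa using this
    · rintro ⟨hxC, h⟩
      set z := S x with hz
      have hzC : z ∈ C := (hS x).1
      have key := (hS x).2 x hxC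
      have h1 : F x z ≥ 0 := h z hzC
      have h2 : F x z + F z x ≤ 0 := hA2 x hxC z hzC
      have h3 : F z x ≤ 0 := by linarith
      have hr' : (0:ℝ) < 1 / r := by positivity
      have h4 : 0 ≤ (J z - J x) (x - z) := by
        by_contra hneg
        push_neg at hneg
        have : 1 / r * ((J z - J x) (x - z)) < 0 := mul_neg_of_pos_of_neg hr' hneg
        rw [← hz] at key
        linarith
      have expand : (J z - J x) (x - z) = J z x - J z z - (J x x - J x z) := by
        simp only [ContinuousLinearMap.sub_apply, map_sub]
        ring
      have hzz := hJ1 z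
      have hxx := hJ1 x
      have hb1 : J z x ≤ ‖z‖ * ‖x‖ := by
        have hop := (J z).le_opNorm x
        rw [hJ2] at hop
        calc J z x ≤ |J z x| := le_abs_self _
          _ = ‖J z x‖ := (Real.norm_eq_abs _).symm
          _ ≤ ‖z‖ * ‖x‖ := hop
      have hb2 : J x z ≤ ‖x‖ * ‖z‖ := by
        have hop := (J x).le_opNorm z
        rw [hJ2] at hop
        calc J x z ≤ |J x z| := le_abs_self _
          _ = ‖J x z‖ := (Real.norm_eq_abs _).symm
          _ ≤ ‖x‖ * ‖z‖ := hop
      rw [expand, hzz, hxx] at h4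
      have hsq : (‖z‖ - ‖x‖) ^ 2 ≤ 0 := by nlinarith
      have hnorm : ‖z‖ = ‖x‖ := by nlinarith [sq_nonneg (‖z‖ - ‖x‖)]
      have hJxz : J x z = ‖x‖ ^ 2 := by nlinarith
      by_contra hne
      have hne' : x ≠ z := fun hxz => hne (hxz ▸ rfl)
      have hx0 : x ≠ 0 := by
        intro h0
        apply hne'
        have : ‖z‖ = 0 := by rw [hnorm, h0, norm_zero]
        rw [h0, norm_eq_zero.mp this]
      have hxpos : (0:ℝ) < ‖x‖ := norm_pos_iff.mpr hx0
      have hmid : ‖(1 / 2 : ℝ) • (x + z)‖ < ‖x‖ :=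
        (norm_midpoint_lt_iff hnorm.symm).mpr hne'
      have hJm : J x ((1 / 2 : ℝ) • (x + z)) = ‖x‖ ^ 2 := by
        rw [map_smul, map_add, hxx, hJxz]
        simp
        ring
      have hop := (J x).le_opNorm ((1 / 2 : ℝ) • (x + z))
      rw [hJ2] at hop
      have : J x ((1 / 2 : ℝ) • (x + z)) ≤ ‖x‖ * ‖(1 / 2 : ℝ) • (x + z)‖ :=
        (le_abs_self _).trans (by rw [← Real.norm_eq_abs]; exact hop)
      rw [hJm] at this
      nlinarith
  refine ⟨hEq, ?_, ?_⟩
  · rw [hMinty]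
    have : {x ∈ C | ∀ y ∈ C, F y x ≤ 0} = ⋂ y ∈ C, {x ∈ C | F y x ≤ 0} := by
      ext x
      simp only [Set.mem_setOf_eq, Set.mem_iInter]
      constructor
      · rintro ⟨hx, h⟩ y hy
        exact ⟨hx, h y hy⟩
      · intro h
        obtain ⟨y0, hy0⟩ := hC
        exact ⟨(h y0 hy0).1, fun y hy => (h y hy).2⟩
    rw [this]
    refine isClosed_biInter fun y hy => ?_
    -- closedness of the sublevel set of a lsc function on a closed set
    have lsc := (hA4 y hy).2
    rw [← isOpen_compl_iff] at hCc ⊢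
    rw [isOpen_iff_mem_nhds] at hCc ⊢
    intro x hx
    by_cases hxC : x ∈ C
    · have hpos : 0 < F y x := by
        by_contra hle
        exact hx ⟨hxC, by linarith⟩
      have := lsc x hxC 0 hpos
      rw [eventually_nhdsWithin_iff] at this
      filter_upwards [this] with z hz hzS
      exact absurd (hz hzS.1) (by linarith [hzS.2])
    · filter_upwards [hCc x hxC] with z hz hzS
      exact hz hzS.1
  · rw [hMinty]
    have : {x ∈ C | ∀ y ∈ C, F y x ≤ 0} = ⋂ y ∈ C, {x ∈ C | F y x ≤ 0} := by
      ext x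
      simp only [Set.mem_setOf_eq, Set.mem_iInter]
      constructor
      · rintro ⟨hx, h⟩ y hy
        exact ⟨hx, h y hy⟩
      · intro h
        obtain ⟨y0, hy0⟩ := hC
        exact ⟨(h y0 hy0).1, fun y hy => (h y hy).2⟩
    rw [this]
    exact convex_iInter₂ fun y hy => (hA4 y hy).1.convex_le 0
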